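/- For every ordinal κ > 0 there exist a set Z, a collection 𝒴 of subsets of Z closed under arbitrary intersections, and a function μ : 𝒴 → 𝒫(Z) such that μ satisfies (μ⊆), (μPR), (μCum), and (μCumt α) holds for every ordinal α < κ, but (μCum κ) fails. -/

import Mathlib

/-- (μCum α). -/
def muCumOrd {Z : Type} (𝒴 : Set (Set Z)) (μ : Set Z → Set Z) (α : Ordinal.{0}) : Prop :=
  ∀ U ∈ 𝒴, ∀ X : Ordinal.{0} → Set Z,
    (∀ β ≤ α, X β ∈ 𝒴) →
    (∀ β ≤ α, μ (X β) ⊆ U ∪ ⋃ γ ∈ Set.Iio β, X γ) →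
    (⋂ γ ∈ Set.Iic α, X γ) ∩ μ U ⊆ μ (X α)

/-- (μCumt α). -/
def muCumtOrd {Z : Type} (𝒴 : Set (Set Z)) (μ : Set Z → Set Z) (α : Ordinal.{0}) : Prop :=
  ∀ U ∈ 𝒴, ∀ X : Ordinal.{0} → Set Z,
    (∀ β ≤ α, X β ∈ 𝒴) →
    (∀ β ≤ α, μ (X β) ⊆ U ∪ ⋃ γ ∈ Set.Iio β, X γ) →
    X α ∩ μ U ⊆ μ (X α)


namespace MuHier

inductive Pt (T : Type) : Type
  | z : Pt T
  | w : Pt T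
  | w0 : Pt T
  | m : T → T → Pt T

variable {T : Type} [LinearOrder T]

def Qs : Set (Pt T) := {Pt.z}
def Us : Set (Pt T) := {Pt.z, Pt.w, Pt.w0}
def Rs : Set (Pt T) := {Pt.z, Pt.w0}
def Ss : Set (Pt T) := {Pt.z, Pt.w}
def Ps (d g : T) : Set (Pt T) := {Pt.z, Pt.m d g}

variable (bot top : T)

def Xs (b : T) : Set (Pt T) :=
  {p | p = Pt.z ∨ (b = bot ∧ p = Pt.w0) ∨ (b = top ∧ p = Pt.w) ∨
    (∃ g, g < b ∧ p = Pt.m b g) ∨ (∃ d, b < d ∧ p = Pt.m d b)}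

def muXs (b : T) : Set (Pt T) :=
  {p | (b = top ∧ p = Pt.w) ∨ (b ≠ top ∧ p = Pt.z) ∨ (b ≠ top ∧ b = bot ∧ p = Pt.w0) ∨
    (∃ g, g < b ∧ p = Pt.m b g)}

def Ys : Set (Set (Pt T)) :=
  {A | A = Qs ∨ A = Us ∨ A = Rs ∨ A = Ss ∨ (∃ d g, g < d ∧ A = Ps d g) ∨ (∃ b, A = Xs bot top b)}

open Classical in
noncomputable def mu (A : Set (Pt T)) : Set (Pt T) :=
  if h : ∃ b, A = Xs bot top b then muXs bot top h.choose else A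

/-! ### membership lemmas -/

variable {bot top}

@[simp] lemma z_mem_Xs {b : T} : Pt.z ∈ Xs bot top b := Or.inl rfl

@[simp] lemma w_mem_Xs {b : T} : Pt.w ∈ Xs bot top b ↔ b = top := by
  simp [Xs]

@[simp] lemma w0_mem_Xs {b : T} : Pt.w0 ∈ Xs bot top b ↔ b = bot := by
  simp [Xs]

@[simp] lemma m_mem_Xs {b d g : T} :
    Pt.m d g ∈ Xs bot top b ↔ (b = d ∧ g < d) ∨ (b = g ∧ g < d) := by
  constructor
  · rintro (h | ⟨-, h⟩ | ⟨-, h⟩ | ⟨g', hg', h⟩ | ⟨d', hd', h⟩)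
    · exact absurd h (by simp)
    · exact absurd h (by simp)
    · exact absurd h (by simp)
    · obtain ⟨rfl, rfl⟩ := Pt.m.inj h
      exact Or.inl ⟨rfl, hg'⟩
    · obtain ⟨rfl, rfl⟩ := Pt.m.inj h
      exact Or.inr ⟨rfl, hd'⟩
  · rintro (⟨rfl, h⟩ | ⟨rfl, h⟩)
    · exact Or.inr (Or.inr (Or.inr (Or.inl ⟨g, h, rfl⟩)))
    · exact Or.inr (Or.inr (Or.inr (Or.inr ⟨d, h, rfl⟩)))

@[simp] lemma z_mem_muXs {b : T} : Pt.z ∈ muXs bot top b ↔ b ≠ top := by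
  simp [muXs]

@[simp] lemma w_mem_muXs {b : T} : Pt.w ∈ muXs bot top b ↔ b = top := by
  simp [muXs]

@[simp] lemma w0_mem_muXs {b : T} : Pt.w0 ∈ muXs bot top b ↔ (b ≠ top ∧ b = bot) := by
  simp [muXs]

@[simp] lemma m_mem_muXs {b d g : T} :
    Pt.m d g ∈ muXs bot top b ↔ (b = d ∧ g < d) := by
  constructor
  · rintro (⟨-, h⟩ | ⟨-, h⟩ | ⟨-, -, h⟩ | ⟨g', hg', h⟩)
    · exact absurd h (by simp)
    · exact absurd h (by simp)
    · exact absurd h (by simp)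
    · obtain ⟨rfl, rfl⟩ := Pt.m.inj h
      exact ⟨rfl, hg'⟩
  · rintro ⟨rfl, h⟩
    exact Or.inr (Or.inr (Or.inr ⟨g, h, rfl⟩))

lemma muXs_subset_Xs {b : T} : muXs bot top b ⊆ Xs bot top b := by
  rintro p (⟨hb, rfl⟩ | ⟨-, rfl⟩ | ⟨-, hb, rfl⟩ | ⟨g', hg', rfl⟩)
  · simp [hb]
  · simp
  · simp [hb]
  · simp [hg']

/-- every member of `Ys` contains `z`. -/
lemma z_mem_of_mem_Ys {A : Set (Pt T)} (hA : A ∈ Ys bot top) : Pt.z ∈ A := by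
  rcases hA with rfl | rfl | rfl | rfl | ⟨d, g, -, rfl⟩ | ⟨b, rfl⟩ <;> simp [Qs, Us, Rs, Ss, Ps]

lemma Qs_mem_Ys : Qs ∈ Ys (T := T) bot top := Or.inl rfl
lemma Us_mem_Ys : Us ∈ Ys (T := T) bot top := Or.inr (Or.inl rfl)
lemma Rs_mem_Ys : Rs ∈ Ys (T := T) bot top := Or.inr (Or.inr (Or.inl rfl))
lemma Ss_mem_Ys : Ss ∈ Ys (T := T) bot top := Or.inr (Or.inr (Or.inr (Or.inl rfl)))
lemma Ps_mem_Ys {d g : T} (h : g < d) : Ps d g ∈ Ys bot top :=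
  Or.inr (Or.inr (Or.inr (Or.inr (Or.inl ⟨d, g, h, rfl⟩))))
lemma Xs_mem_Ys {b : T} : Xs bot top b ∈ Ys bot top :=
  Or.inr (Or.inr (Or.inr (Or.inr (Or.inr ⟨b, rfl⟩))))

section Struct

variable (hbot : ∀ x : T, bot ≤ x) (htop : ∀ x : T, x ≤ top) (hbt : bot < top)
include hbot htop hbt

lemma Xs_antichain {b b' : T} (h : Xs bot top b ⊆ Xs bot top b') : b = b' := by
  by_contra hne
  rcases eq_or_ne b bot with hbe | hb0
  · exact hne (hbe.trans (w0_mem_Xs.mp (h (w0_mem_Xs.mpr hbe))).symm)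
  · have hblt : bot < b := (hbot b).lt_of_ne (Ne.symm hb0)
    have h1 := m_mem_Xs.mp (h (m_mem_Xs.mpr (Or.inl ⟨rfl, hblt⟩)))
    rcases h1 with ⟨he, -⟩ | ⟨hb', -⟩
    · exact hne he.symm
    · rcases eq_or_ne b top with hbe | hbt'
      · have h2 : b' = top := w_mem_Xs.mp (h (w_mem_Xs.mpr hbe))
        exact hbt.ne (hb'.symm.trans h2)
      · have hlt : b < top := (htop b).lt_of_ne hbt'
        have h2 := m_mem_Xs.mp (h (m_mem_Xs.mpr (Or.inr ⟨rfl, hlt⟩)))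
        rcases h2 with ⟨h3, -⟩ | ⟨h3, -⟩
        · exact hbt.ne (hb'.symm.trans h3)
        · exact hb0 (hb'.symm.trans h3).symm

lemma Xs_not_subset_small {b : T} {A : Set (Pt T)}
    (hA : A = Qs ∨ A = Us ∨ A = Rs ∨ A = Ss ∨ ∃ d g, g < d ∧ A = Ps d g) :
    ¬ Xs bot top b ⊆ A := by
  intro h
  rcases eq_or_ne b bot with hbe | hb0
  · have h1 := h (m_mem_Xs.mpr (Or.inr ⟨hbe, hbt⟩))
    have h2 := h (w0_mem_Xs.mpr hbe)
    rcases hA with rfl | rfl | rfl | rfl | ⟨d', g', -, rfl⟩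
    · simp [Qs] at h2
    · simp [Us] at h1
    · simp [Rs] at h1
    · simp [Ss] at h1
    · simp [Ps] at h2
  · have hblt : bot < b := (hbot b).lt_of_ne (Ne.symm hb0)
    have h1 := h (m_mem_Xs.mpr (Or.inl ⟨rfl, hblt⟩))
    rcases eq_or_ne b top with hbe | hbt'
    · have h2 := h (w_mem_Xs.mpr hbe)
      rcases hA with rfl | rfl | rfl | rfl | ⟨d', g', -, rfl⟩
      · simp [Qs] at h1
      · simp [Us] at h1
      · simp [Rs] at h1
      · simp [Ss] at h1
      · simp [Ps] at h2
    · have hlt : b < top := (htop b).lt_of_ne hbt'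
      have h2 := h (m_mem_Xs.mpr (Or.inr ⟨rfl, hlt⟩))
      rcases hA with rfl | rfl | rfl | rfl | ⟨d', g', -, rfl⟩
      · simp [Qs] at h1
      · simp [Us] at h1
      · simp [Rs] at h1
      · simp [Ss] at h1
      · simp [Ps] at h1 h2
        exact hbt' (h1.1.trans h2.1.symm)


omit hbot htop hbt in
lemma Ys_cases {A : Set (Pt T)} (hA : A ∈ Ys bot top) :
    (A = Qs ∨ A = Us ∨ A = Rs ∨ A = Ss ∨ ∃ d g, g < d ∧ A = Ps d g) ∨ ∃ b, A = Xs bot top b := by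
  rcases hA with h | h | h | h | h | h
  exacts [Or.inl (Or.inl h), Or.inl (Or.inr (Or.inl h)), Or.inl (Or.inr (Or.inr (Or.inl h))),
    Or.inl (Or.inr (Or.inr (Or.inr (Or.inl h)))),
    Or.inl (Or.inr (Or.inr (Or.inr (Or.inr h)))), Or.inr h]

lemma Xs_inj {b b' : T} (h : Xs bot top b = Xs bot top b') : b = b' :=
  Xs_antichain hbot htop hbt h.le

lemma mu_Xs {b : T} : mu bot top (Xs bot top b) = muXs bot top b := by
  have h : ∃ b', Xs bot top b = Xs bot top b' := ⟨b, rfl⟩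
  have hc : h.choose = b := (Xs_inj hbot htop hbt h.choose_spec).symm
  rw [mu, dif_pos h, hc]

lemma small_ne_Xs {A : Set (Pt T)}
    (hA : A = Qs ∨ A = Us ∨ A = Rs ∨ A = Ss ∨ ∃ d g, g < d ∧ A = Ps d g) :
    ¬ ∃ b, A = Xs bot top b := by
  rintro ⟨b, rfl⟩
  exact Xs_not_subset_small hbot htop hbt hA subset_rfl

lemma mu_small {A : Set (Pt T)}
    (hA : A = Qs ∨ A = Us ∨ A = Rs ∨ A = Ss ∨ ∃ d g, g < d ∧ A = Ps d g) :
    mu bot top A = A := by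
  rw [mu, dif_neg (small_ne_Xs hbot htop hbt hA)]

omit hbot htop hbt in
lemma mu_subset (A : Set (Pt T)) : mu bot top A ⊆ A := by
  rw [mu]
  split
  · next h => exact muXs_subset_Xs.trans (subset_of_eq h.choose_spec.symm)
  · exact subset_rfl

/-- the (μPR) condition. -/
lemma muPR {X Y : Set (Pt T)} (hX : X ∈ Ys bot top) (hY : Y ∈ Ys bot top)
    (hXY : X ⊆ Y) : mu bot top Y ∩ X ⊆ mu bot top X := by
  rcases Ys_cases hX with hXs | ⟨b, rfl⟩
  · rw [mu_small hbot htop hbt hXs]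
    exact Set.inter_subset_right
  · rcases Ys_cases hY with hYs | ⟨b', rfl⟩
    · exact absurd hXY (Xs_not_subset_small hbot htop hbt hYs ∘ fun h => h)
    · obtain rfl : b = b' := Xs_antichain hbot htop hbt hXY
      rw [mu_Xs hbot htop hbt]
      exact Set.inter_subset_left

/-- the (μCum) condition. -/
lemma muCum {X Y : Set (Pt T)} (hX : X ∈ Ys bot top) (hY : Y ∈ Ys bot top)
    (h1 : mu bot top X ⊆ Y) (h2 : Y ⊆ X) : mu bot top X = mu bot top Y := by
  rcases Ys_cases hX with hXs | ⟨b, rfl⟩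
  · rw [mu_small hbot htop hbt hXs] at h1
    obtain rfl : X = Y := le_antisymm h1 h2
    rfl
  · rcases Ys_cases hY with hYs | ⟨b', rfl⟩
    · -- Y is small, muXs b ⊆ Y ⊆ Xs b
      rw [mu_Xs hbot htop hbt] at h1 ⊢
      rw [mu_small hbot htop hbt hYs]
      refine le_antisymm h1 ?_
      rcases eq_or_ne b top with hbe | hbt'
      · have hw : Pt.w ∈ Y := h1 (w_mem_muXs.mpr hbe)
        have hm : Pt.m b bot ∈ Y := h1 (m_mem_muXs.mpr ⟨rfl, hbe ▸ hbt⟩)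
        rcases hYs with rfl | rfl | rfl | rfl | ⟨d', g', -, rfl⟩
        · simp [Qs] at hw
        · have hb0 : b = bot := w0_mem_Xs.mp (h2 (show Pt.w0 ∈ Us by simp [Us]))
          exact absurd (hbe.symm.trans hb0) hbt.ne'
        · simp [Rs] at hw
        · simp [Ss] at hm
        · simp [Ps] at hw
      · rcases eq_or_ne b bot with hbe | hb0
        · -- b = bot : muXs bot = {z, w0} = Rs
          have hw0 : Pt.w0 ∈ Y := h1 (w0_mem_muXs.mpr ⟨hbt', hbe⟩)
          rcases hYs with rfl | rfl | rfl | rfl | ⟨d', g', -, rfl⟩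
          · simp [Qs] at hw0
          · have htp : b = top := w_mem_Xs.mp (h2 (show Pt.w ∈ Us by simp [Us]))
            exact absurd (hbe.symm.trans htp) hbt.ne
          · intro p hp
            simp only [Rs, Set.mem_insert_iff, Set.mem_singleton_iff] at hp
            rcases hp with rfl | rfl
            · exact z_mem_muXs.mpr hbt'
            · exact w0_mem_muXs.mpr ⟨hbt', hbe⟩
          · simp [Ss] at hw0
          · simp [Ps] at hw0
        · -- bot < b < top
          have hblt : bot < b := (hbot b).lt_of_ne (Ne.symm hb0)
          have hm : Pt.m b bot ∈ Y := h1 (m_mem_muXs.mpr ⟨rfl, hblt⟩)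
          rcases hYs with rfl | rfl | rfl | rfl | ⟨d', g', -, rfl⟩
          · simp [Qs] at hm
          · simp [Us] at hm
          · simp [Rs] at hm
          · simp [Ss] at hm
          · simp only [Ps, Set.mem_insert_iff, Set.mem_singleton_iff] at hm
            rcases hm with hm | hm
            · exact absurd hm (by simp)
            · obtain ⟨rfl, rfl⟩ := Pt.m.inj hm.symm
              intro p hp
              simp only [Ps, Set.mem_insert_iff, Set.mem_singleton_iff] at hp
              rcases hp with rfl | rfl
              · exact z_mem_muXs.mpr hbt'
              · exact m_mem_muXs.mpr ⟨rfl, hblt⟩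
    · obtain rfl : b' = b := Xs_antichain hbot htop hbt h2
      rfl

omit hbot htop hbt in
lemma w_mem_Ys {A : Set (Pt T)} (hA : A ∈ Ys bot top) (h : Pt.w ∈ A) :
    A = Us ∨ A = Ss ∨ A = Xs bot top top := by
  rcases hA with rfl | rfl | rfl | rfl | ⟨d', g', -, rfl⟩ | ⟨b, rfl⟩
  · simp [Qs] at h
  · exact Or.inl rfl
  · simp [Rs] at h
  · exact Or.inr (Or.inl rfl)
  · simp [Ps] at h
  · rw [w_mem_Xs] at h
    exact Or.inr (Or.inr (by rw [h]))

omit hbot htop hbt in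
lemma w0_mem_Ys {A : Set (Pt T)} (hA : A ∈ Ys bot top) (h : Pt.w0 ∈ A) :
    A = Us ∨ A = Rs ∨ A = Xs bot top bot := by
  rcases hA with rfl | rfl | rfl | rfl | ⟨d', g', -, rfl⟩ | ⟨b, rfl⟩
  · simp [Qs] at h
  · exact Or.inl rfl
  · exact Or.inr (Or.inl rfl)
  · simp [Ss] at h
  · simp [Ps] at h
  · rw [w0_mem_Xs] at h
    exact Or.inr (Or.inr (by rw [h]))

omit hbot htop hbt in
lemma m_mem_Ys {A : Set (Pt T)} {d g : T} (hA : A ∈ Ys bot top) (h : Pt.m d g ∈ A) :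
    g < d ∧ (A = Ps d g ∨ A = Xs bot top d ∨ A = Xs bot top g) := by
  rcases hA with rfl | rfl | rfl | rfl | ⟨d', g', hd'g', rfl⟩ | ⟨b, rfl⟩
  · simp [Qs] at h
  · simp [Us] at h
  · simp [Rs] at h
  · simp [Ss] at h
  · simp only [Ps, Set.mem_insert_iff, Set.mem_singleton_iff] at h
    rcases h with h | h
    · exact absurd h (by simp)
    · obtain ⟨rfl, rfl⟩ := Pt.m.inj h
      exact ⟨hd'g', Or.inl rfl⟩
  · rw [m_mem_Xs] at h
    rcases h with ⟨rfl, hlt⟩ | ⟨rfl, hlt⟩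
    · exact ⟨hlt, Or.inr (Or.inl rfl)⟩
    · exact ⟨hlt, Or.inr (Or.inr rfl)⟩

omit hbot htop in
lemma mem_w_w0 {A : Set (Pt T)} (hA : A ∈ Ys bot top) (h1 : Pt.w ∈ A) (h2 : Pt.w0 ∈ A) :
    A = Us := by
  rcases w_mem_Ys hA h1 with rfl | rfl | rfl
  · rfl
  · simp [Ss] at h2
  · rw [w0_mem_Xs] at h2
    exact absurd h2 hbt.ne'

omit hbot htop hbt in
lemma mem_w_m {A : Set (Pt T)} {d g : T} (hA : A ∈ Ys bot top) (h1 : Pt.w ∈ A)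
    (h2 : Pt.m d g ∈ A) : A = Xs bot top top := by
  rcases w_mem_Ys hA h1 with rfl | rfl | rfl
  · simp [Us] at h2
  · simp [Ss] at h2
  · rfl

omit hbot htop hbt in
lemma mem_w0_m {A : Set (Pt T)} {d g : T} (hA : A ∈ Ys bot top) (h1 : Pt.w0 ∈ A)
    (h2 : Pt.m d g ∈ A) : A = Xs bot top bot := by
  rcases w0_mem_Ys hA h1 with rfl | rfl | rfl
  · simp [Us] at h2
  · simp [Rs] at h2
  · rfl

omit hbot htop hbt in
lemma mem_m_m {A : Set (Pt T)} {d g d' g' : T} (hA : A ∈ Ys bot top)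
    (h1 : Pt.m d g ∈ A) (h2 : Pt.m d' g' ∈ A) (hne : ¬(d = d' ∧ g = g')) :
    ∃ b, (b = d ∨ b = g) ∧ (b = d' ∨ b = g') ∧ A = Xs bot top b := by
  obtain ⟨hdg, hA'⟩ := m_mem_Ys hA h1
  rcases hA' with rfl | rfl | rfl
  · simp only [Ps, Set.mem_insert_iff, Set.mem_singleton_iff] at h2
    rcases h2 with h2 | h2
    · exact absurd h2 (by simp)
    · obtain ⟨rfl, rfl⟩ := Pt.m.inj h2
      exact absurd ⟨rfl, rfl⟩ hne
  · refine ⟨d, Or.inl rfl, ?_, rfl⟩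
    have := m_mem_Xs.mp h2
    tauto
  · refine ⟨g, Or.inr rfl, ?_, rfl⟩
    have := m_mem_Xs.mp h2
    tauto

omit hbot htop in
lemma two_common {A B : Set (Pt T)} {q r : Pt T} (hA : A ∈ Ys bot top) (hB : B ∈ Ys bot top)
    (hqA : q ∈ A) (hqB : q ∈ B) (hrA : r ∈ A) (hrB : r ∈ B)
    (hq : q ≠ Pt.z) (hr : r ≠ Pt.z) (hqr : q ≠ r) : A = B := by
  cases q with
  | z => exact absurd rfl hq
  | w =>
    cases r with
    | z => exact absurd rfl hr
    | w => exact absurd rfl hqr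
    | w0 => exact (mem_w_w0 hbt hA hqA hrA).trans (mem_w_w0 hbt hB hqB hrB).symm
    | m d g => exact (mem_w_m hA hqA hrA).trans (mem_w_m hB hqB hrB).symm
  | w0 =>
    cases r with
    | z => exact absurd rfl hr
    | w => exact (mem_w_w0 hbt hA hrA hqA).trans (mem_w_w0 hbt hB hrB hqB).symm
    | w0 => exact absurd rfl hqr
    | m d g => exact (mem_w0_m hA hqA hrA).trans (mem_w0_m hB hqB hrB).symm
  | m d g =>
    cases r with
    | z => exact absurd rfl hr
    | w => exact (mem_w_m hA hrA hqA).trans (mem_w_m hB hrB hqB).symm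
    | w0 => exact (mem_w0_m hA hrA hqA).trans (mem_w0_m hB hrB hqB).symm
    | m d' g' =>
      have hne : ¬(d = d' ∧ g = g') := by
        rintro ⟨rfl, rfl⟩
        exact hqr rfl
      have hdg : g < d := (m_mem_Ys hA hqA).1
      have hd'g' : g' < d' := (m_mem_Ys hA hrA).1
      obtain ⟨bA, e1, e2, rfl⟩ := mem_m_m hA hqA hrA hne
      obtain ⟨bB, e3, e4, rfl⟩ := mem_m_m hB hqB hrB hne
      suffices h : bA = bB by rw [h]
      rcases e1 with e1 | e1 <;> rcases e2 with e2 | e2 <;>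
        rcases e3 with e3 | e3 <;> rcases e4 with e4 | e4 <;>
        subst_vars <;>
        first
          | rfl
          | exact absurd hdg (lt_irrefl _)
          | exact absurd hd'g' (lt_irrefl _)
          | exact absurd (hdg.trans hd'g') (lt_irrefl _)
          | exact absurd (hd'g'.trans hdg) (lt_irrefl _)
          | exact absurd ⟨rfl, rfl⟩ hne

omit hbot htop in
lemma sInter_mem {S : Set (Set (Pt T))} (hS : S ⊆ Ys bot top) (hne : S.Nonempty) :
    ⋂₀ S ∈ Ys bot top := by
  obtain ⟨A0, hA0⟩ := hne
  by_cases hall : ∀ A ∈ S, A = A0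
  · have heq : ⋂₀ S = A0 := by
      apply le_antisymm
      · exact Set.sInter_subset_of_mem hA0
      · intro x hx
        exact Set.mem_sInter.mpr fun A hA => (hall A hA) ▸ hx
    rw [heq]
    exact hS hA0
  · push_neg at hall
    obtain ⟨B, hB, hBne⟩ := hall
    by_cases hzz : ∃ p ∈ ⋂₀ S, p ≠ Pt.z
    · obtain ⟨p, hp, hpz⟩ := hzz
      have heq : ⋂₀ S = {Pt.z, p} := by
        apply le_antisymm
        · intro q hq
          rcases eq_or_ne q Pt.z with rfl | hqz
          · exact Set.mem_insert _ _
          rcases eq_or_ne q p with rfl | hqp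
          · exact Set.mem_insert_of_mem _ rfl
          · exact absurd (two_common hbt (hS hA0) (hS hB)
              (Set.mem_sInter.mp hq _ hA0) (Set.mem_sInter.mp hq _ hB)
              (Set.mem_sInter.mp hp _ hA0) (Set.mem_sInter.mp hp _ hB) hqz hpz hqp) hBne.symm
        · intro q hq
          apply Set.mem_sInter.mpr
          intro A hA
          rcases hq with rfl | hq
          · exact z_mem_of_mem_Ys (hS hA)
          · rw [Set.mem_singleton_iff] at hq
            subst hq
            exact Set.mem_sInter.mp hp _ hA
      rw [heq]
      cases p with
      | z => exact absurd rfl hpz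
      | w => exact Ss_mem_Ys
      | w0 => exact Rs_mem_Ys
      | m d g => exact Ps_mem_Ys ((m_mem_Ys (hS hA0) (Set.mem_sInter.mp hp _ hA0)).1)
    · push_neg at hzz
      have heq : ⋂₀ S = Qs := by
        apply le_antisymm
        · intro q hq
          rw [Qs, Set.mem_singleton_iff]
          exact hzz q hq
        · intro q hq
          rw [Qs, Set.mem_singleton_iff] at hq
          subst hq
          exact Set.mem_sInter.mpr fun A hA => z_mem_of_mem_Ys (hS hA)
      rw [heq]
      exact Qs_mem_Ys

end Struct

section Family

variable (hbot : ∀ x : T, bot ≤ x) (htop : ∀ x : T, x ≤ top) (hbt : bot < top)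
variable {α : Ordinal.{0}} {U' : Set (Pt T)} {X' : Ordinal.{0} → Set (Pt T)}
variable (hU' : U' ∈ Ys bot top)
variable (hmem : ∀ β ≤ α, X' β ∈ Ys bot top)
variable (hyp : ∀ β ≤ α, mu bot top (X' β) ⊆ U' ∪ ⋃ γ ∈ Set.Iio β, X' γ)

include hbot htop hbt hmem hyp

lemma sticky_w (hw : Pt.w ∉ U') : ∀ β ≤ α, Pt.w ∉ X' β := by
  intro β
  induction β using Ordinal.induction with
  | _ β IH =>
    intro hβ hmemw
    have hmu : Pt.w ∈ mu bot top (X' β) := by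
      rcases w_mem_Ys (hmem β hβ) hmemw with hE | hE | hE <;> rw [hE] at hmemw ⊢
      · rw [mu_small hbot htop hbt (Or.inr (Or.inl rfl))]; exact hmemw
      · rw [mu_small hbot htop hbt (Or.inr (Or.inr (Or.inr (Or.inl rfl))))]; exact hmemw
      · rw [mu_Xs hbot htop hbt]; exact w_mem_muXs.mpr rfl
    rcases hyp β hβ hmu with h | h
    · exact hw h
    · simp only [Set.mem_iUnion, Set.mem_Iio, exists_prop] at h
      obtain ⟨γ, hγ, hγ2⟩ := h
      exact IH γ hγ (hγ.le.trans hβ) hγ2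

lemma sticky_w0 (hw : Pt.w0 ∉ U') : ∀ β ≤ α, Pt.w0 ∉ X' β := by
  intro β
  induction β using Ordinal.induction with
  | _ β IH =>
    intro hβ hmemw
    have hmu : Pt.w0 ∈ mu bot top (X' β) := by
      rcases w0_mem_Ys (hmem β hβ) hmemw with hE | hE | hE <;> rw [hE] at hmemw ⊢
      · rw [mu_small hbot htop hbt (Or.inr (Or.inl rfl))]; exact hmemw
      · rw [mu_small hbot htop hbt (Or.inr (Or.inr (Or.inl rfl)))]; exact hmemw
      · rw [mu_Xs hbot htop hbt]; exact w0_mem_muXs.mpr ⟨hbt.ne, rfl⟩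
    rcases hyp β hβ hmu with h | h
    · exact hw h
    · simp only [Set.mem_iUnion, Set.mem_Iio, exists_prop] at h
      obtain ⟨γ, hγ, hγ2⟩ := h
      exact IH γ hγ (hγ.le.trans hβ) hγ2

lemma marker_occ {d g : T} (hdg : g < d) (hnU : Pt.m d g ∉ U') :
    ∀ β ≤ α, Pt.m d g ∈ X' β → ∃ δ ≤ β, X' δ = Xs bot top g := by
  intro β
  induction β using Ordinal.induction with
  | _ β IH =>
    intro hβ hm
    obtain ⟨-, hcase⟩ := m_mem_Ys (hmem β hβ) hm
    rcases hcase with hE | hE | hE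
    · -- X' β = Ps d g
      have hmu : Pt.m d g ∈ mu bot top (X' β) := by
        rw [hE, mu_small hbot htop hbt (Or.inr (Or.inr (Or.inr (Or.inr ⟨d, g, hdg, rfl⟩))))]
        simp [Ps]
      rcases hyp β hβ hmu with h | h
      · exact absurd h hnU
      · simp only [Set.mem_iUnion, Set.mem_Iio, exists_prop] at h
        obtain ⟨γ, hγ, hγ2⟩ := h
        obtain ⟨δ, hδ, hδ2⟩ := IH γ hγ (hγ.le.trans hβ) hγ2
        exact ⟨δ, hδ.trans hγ.le, hδ2⟩
    · -- X' β = Xs d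
      have hmu : Pt.m d g ∈ mu bot top (X' β) := by
        rw [hE, mu_Xs hbot htop hbt]
        exact m_mem_muXs.mpr ⟨rfl, hdg⟩
      rcases hyp β hβ hmu with h | h
      · exact absurd h hnU
      · simp only [Set.mem_iUnion, Set.mem_Iio, exists_prop] at h
        obtain ⟨γ, hγ, hγ2⟩ := h
        obtain ⟨δ, hδ, hδ2⟩ := IH γ hγ (hγ.le.trans hβ) hγ2
        exact ⟨δ, hδ.trans hγ.le, hδ2⟩
    · exact ⟨β, le_rfl, hE⟩

variable (rk : T → Ordinal.{0})
variable (hrk : ∀ {x y : T}, x < y ↔ rk x < rk y)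
variable (hrkc : ∀ (b : T) (β : Ordinal.{0}), (∀ b', b' < b → rk b' < β) → rk b ≤ β)

include hrk hrkc

lemma rank_le (hUm : ∀ d g : T, Pt.m d g ∉ U') :
    ∀ (o : Ordinal.{0}) (b : T), rk b = o → ∀ β ≤ α, X' β = Xs bot top b → o ≤ β := by
  intro o
  induction o using Ordinal.induction with
  | _ o IH =>
    intro b hbo β hβ hXb
    subst hbo
    apply hrkc
    intro b' hb'
    have hmu : Pt.m b b' ∈ mu bot top (X' β) := by
      rw [hXb, mu_Xs hbot htop hbt]
      exact m_mem_muXs.mpr ⟨rfl, hb'⟩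
    rcases hyp β hβ hmu with h | h
    · exact absurd h (hUm b b')
    · simp only [Set.mem_iUnion, Set.mem_Iio, exists_prop] at h
      obtain ⟨γ, hγ, hγ2⟩ := h
      obtain ⟨δ, hδ, hδ2⟩ := marker_occ hbot htop hbt hmem hyp hb' (hUm b b')
        γ (hγ.le.trans hβ) hγ2
      have hle : rk b' ≤ δ := IH (rk b') (hrk.mp hb') b' rfl δ ((hδ.trans hγ.le).trans hβ) hδ2
      exact lt_of_le_of_lt (hle.trans hδ) hγ

include hU'

lemma cumt (hα : α < rk top) :
    X' α ∩ mu bot top U' ⊆ mu bot top (X' α) := by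
  rintro t ⟨htX, htU⟩
  by_contra htmu
  rcases Ys_cases (hmem α le_rfl) with hsm | ⟨b, hXb⟩
  · rw [mu_small hbot htop hbt hsm] at htmu
    exact htmu htX
  have hmuXb : mu bot top (X' α) = muXs bot top b := by rw [hXb, mu_Xs hbot htop hbt]
  rw [hmuXb] at htmu
  rw [hXb] at htX
  cases t with
  | z =>
    have hb : b = top := by
      by_contra h
      exact htmu (z_mem_muXs.mpr h)
    have hwU : Pt.w ∈ U' := by
      by_contra hwU
      have hmu : Pt.w ∈ mu bot top (X' α) := by
        rw [hmuXb]; exact w_mem_muXs.mpr hb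
      rcases hyp α le_rfl hmu with h | h
      · exact hwU h
      · simp only [Set.mem_iUnion, Set.mem_Iio, exists_prop] at h
        obtain ⟨γ, hγ, hγ2⟩ := h
        exact sticky_w hbot htop hbt hmem hyp hwU γ hγ.le hγ2
    have hUm : ∀ d g : T, Pt.m d g ∉ U' := by
      rcases w_mem_Ys hU' hwU with hE | hE | hE
      · rw [hE]; intro d g; simp [Us]
      · rw [hE]; intro d g; simp [Ss]
      · -- U' = Xs top : but z ∈ mu U'
        rw [hE, mu_Xs hbot htop hbt] at htU
        exact absurd rfl (z_mem_muXs.mp htU)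
    have := rank_le hbot htop hbt hmem hyp rk hrk hrkc hUm (rk top) top rfl α le_rfl
      (hb ▸ hXb)
    exact absurd this (not_le.mpr hα)
  | w =>
    exact htmu (w_mem_muXs.mpr (w_mem_Xs.mp htX))
  | w0 =>
    have hb := w0_mem_Xs.mp htX
    exact htmu (w0_mem_muXs.mpr ⟨fun h => hbt.ne (hb.symm.trans h), hb⟩)
  | m d g =>
    rcases m_mem_Xs.mp htX with ⟨hbd, hgd⟩ | ⟨hbg, hgd⟩
    · exact htmu (m_mem_muXs.mpr ⟨hbd, hgd⟩)
    · -- hbg : b = g, hgd : g < d ; so the offending point is the marker m d b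
      have hbd : b < d := hbg ▸ hgd
      have hUcase : U' = Ps d b ∨ U' = Xs bot top d := by
        rcases Ys_cases hU' with hsm | ⟨b'', hE⟩
        · rw [mu_small hbot htop hbt hsm] at htU
          obtain ⟨-, h⟩ := m_mem_Ys hU' htU
          rcases h with h | h | h
          · exact Or.inl (hbg ▸ h)
          · exact Or.inr h
          · exact absurd ⟨_, h⟩ (small_ne_Xs hbot htop hbt hsm)
        · rw [hE, mu_Xs hbot htop hbt] at htU
          obtain ⟨hb''d, -⟩ := m_mem_muXs.mp htU
          exact Or.inr (hb''d ▸ hE)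
      have hw0U : Pt.w0 ∉ U' := by
        rcases hUcase with rfl | rfl
        · simp [Ps]
        · rw [w0_mem_Xs]
          intro h
          exact absurd (h ▸ hbd) (not_lt.mpr (hbot b))
      have hnobot : ∀ δ ≤ α, X' δ ≠ Xs bot top bot := by
        intro δ hδ hEδ
        exact sticky_w0 hbot htop hbt hmem hyp hw0U δ hδ (hEδ ▸ (w0_mem_Xs.mpr rfl))
      rcases eq_or_ne b bot with hbb | hbb
      · exact hnobot α le_rfl (hbb ▸ hXb)
      · have hblt : bot < b := (hbot b).lt_of_ne (Ne.symm hbb)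
        have hnU : Pt.m b bot ∉ U' := by
          rcases hUcase with rfl | rfl
          · simp only [Ps, Set.mem_insert_iff, Set.mem_singleton_iff]
            rintro (h | h)
            · exact absurd h (by simp)
            · obtain ⟨h1, -⟩ := Pt.m.inj h
              exact absurd h1 hbd.ne
          · rw [m_mem_Xs]
            rintro (⟨h1, -⟩ | ⟨h1, -⟩)
            · exact absurd h1.symm hbd.ne
            · exact absurd (h1 ▸ hbd) (not_lt.mpr (hbot b))
        have hmu : Pt.m b bot ∈ mu bot top (X' α) := by
          rw [hmuXb]
          exact m_mem_muXs.mpr ⟨rfl, hblt⟩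
        rcases hyp α le_rfl hmu with h | h
        · exact absurd h hnU
        · simp only [Set.mem_iUnion, Set.mem_Iio, exists_prop] at h
          obtain ⟨γ, hγ, hγ2⟩ := h
          obtain ⟨δ, hδ, hδ2⟩ := marker_occ hbot htop hbt hmem hyp hblt hnU γ hγ.le hγ2
          exact hnobot δ (hδ.trans hγ.le) hδ2

end Family

end MuHier

/-- For every ordinal κ > 0 there is an example, on a domain closed under
arbitrary intersections, satisfying (μ⊆), (μPR), (μCum) and (μCumt α) for all
α < κ, in which (μCum κ) fails. -/
theorem muCum_hierarchy_strict :
    ∀ κ : Ordinal.{0}, 0 < κ →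
      ∃ (Z : Type) (𝒴 : Set (Set Z)) (μ : Set Z → Set Z),
        (∀ S : Set (Set Z), S ⊆ 𝒴 → S.Nonempty → ⋂₀ S ∈ 𝒴) ∧
        (∀ X ∈ 𝒴, μ X ⊆ X) ∧
        (∀ X ∈ 𝒴, ∀ Y ∈ 𝒴, X ⊆ Y → μ Y ∩ X ⊆ μ X) ∧
        (∀ X ∈ 𝒴, ∀ Y ∈ 𝒴, μ X ⊆ Y → Y ⊆ X → μ X = μ Y) ∧
        (∀ α < κ, muCumtOrd 𝒴 μ α) ∧
        ¬ muCumOrd 𝒴 μ κ := by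
  intro κ hκ
  classical
  set T := (κ + 1).ToType with hT
  set iso := Ordinal.ToType.mk (o := κ + 1) with hiso
  have hlt : ∀ β : Ordinal.{0}, β ≤ κ → β < κ + 1 := by
    intro β h
    rw [Ordinal.add_one_eq_succ]
    exact Order.lt_succ_iff.mpr h
  set rk : T → Ordinal.{0} := fun b => ((iso.symm b : Set.Iio (κ + 1)) : Ordinal) with hrkdef
  set e : Ordinal.{0} → T := fun β => iso ⟨min β κ, hlt _ (min_le_right _ _)⟩ with hedef
  set bot : T := e 0 with hbotdef
  set top : T := e κ with htopdef
  have hrk : ∀ {x y : T}, x < y ↔ rk x < rk y := by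
    intro x y
    exact ⟨fun h => Subtype.coe_lt_coe.mpr (iso.symm.lt_iff_lt.mpr h),
      fun h => iso.symm.lt_iff_lt.mp (Subtype.coe_lt_coe.mp h)⟩
  have hrkub : ∀ b : T, rk b ≤ κ := by
    intro b
    have h1 : ((iso.symm b : Set.Iio (κ + 1)) : Ordinal) < κ + 1 := (iso.symm b).2
    have h2 : ((iso.symm b : Set.Iio (κ + 1)) : Ordinal) < Order.succ κ := by
      rw [← Ordinal.add_one_eq_succ]
      exact h1
    exact Order.lt_succ_iff.mp h2
  have hrk_e : ∀ β ≤ κ, rk (e β) = β := by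
    intro β hβ
    rw [hrkdef, hedef]
    simp only [OrderIso.symm_apply_apply]
    exact min_eq_left hβ
  have he : ∀ b : T, e (rk b) = b := by
    intro b
    rw [hedef]
    simp only
    have h1 : min (rk b) κ = rk b := min_eq_left (hrkub b)
    have h2 : (⟨min (rk b) κ, hlt _ (min_le_right _ _)⟩ : Set.Iio (κ + 1)) = iso.symm b :=
      Subtype.ext h1
    rw [h2, OrderIso.apply_symm_apply]
  have hrkc : ∀ (b : T) (β : Ordinal.{0}), (∀ b', b' < b → rk b' < β) → rk b ≤ β := by
    intro b β h
    by_contra hc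
    push_neg at hc
    have hβκ : β < κ + 1 := hc.trans ((iso.symm b).2)
    have hrkb' : rk (iso ⟨β, hβκ⟩) = β := by
      rw [hrkdef]
      simp only [OrderIso.symm_apply_apply]
    have hb' : iso ⟨β, hβκ⟩ < b := by
      rw [hrk, hrkb']
      exact hc
    have := h _ hb'
    rw [hrkb'] at this
    exact absurd this (lt_irrefl β)
  have hrktop : rk top = κ := hrk_e κ le_rfl
  have hrkbot : rk bot = 0 := hrk_e 0 (zero_le (a := κ))
  have hbot : ∀ x : T, bot ≤ x := by
    intro x
    by_contra h
    push_neg at h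
    have := hrk.mp h
    rw [hrkbot] at this
    exact absurd this (not_lt_zero (a := rk x))
  have htop : ∀ x : T, x ≤ top := by
    intro x
    by_contra h
    push_neg at h
    have := hrk.mp h
    rw [hrktop] at this
    exact absurd this (not_lt.mpr (hrkub x))
  have hbt : bot < top := by
    rw [hrk, hrkbot, hrktop]
    exact hκ
  refine ⟨MuHier.Pt T, MuHier.Ys bot top, MuHier.mu bot top, ?_, ?_, ?_, ?_, ?_, ?_⟩
  · exact fun S hS hne => MuHier.sInter_mem hbt hS hne
  · exact fun X _ => MuHier.mu_subset X
  · exact fun X hX Y hY hXY => MuHier.muPR hbot htop hbt hX hY hXY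
  · exact fun X hX Y hY h1 h2 => MuHier.muCum hbot htop hbt hX hY h1 h2
  · intro α hα
    intro U hU X hmem hyp
    have hα' : α < rk top := by rw [hrktop]; exact hα
    exact MuHier.cumt hbot htop hbt hU hmem hyp rk (fun {x y} => hrk) hrkc hα'
  · intro H
    set X : Ordinal.{0} → Set (MuHier.Pt T) := fun β => MuHier.Xs bot top (e β) with hXdef
    have hmem : ∀ β ≤ κ, X β ∈ MuHier.Ys bot top := fun β _ => MuHier.Xs_mem_Ys
    have hyp : ∀ β ≤ κ, MuHier.mu bot top (X β) ⊆ MuHier.Us ∪ ⋃ γ ∈ Set.Iio β, X γ := by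
      intro β hβ p hp
      rw [hXdef] at hp
      simp only at hp
      rw [MuHier.mu_Xs hbot htop hbt] at hp
      simp only [MuHier.muXs, Set.mem_setOf_eq] at hp
      rcases hp with ⟨-, rfl⟩ | ⟨-, rfl⟩ | ⟨-, -, rfl⟩ | ⟨g, hg, rfl⟩
      · exact Or.inl (by simp [MuHier.Us])
      · exact Or.inl (by simp [MuHier.Us])
      · exact Or.inl (by simp [MuHier.Us])
      · refine Or.inr ?_
        have hgβ : rk g < β := by
          have := hrk.mp hg
          rw [hrk_e β hβ] at this
          exact this
        refine Set.mem_biUnion (Set.mem_Iio.mpr hgβ) ?_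
        rw [hXdef]
        simp only
        rw [he g]
        exact MuHier.m_mem_Xs.mpr (Or.inr ⟨rfl, hg⟩)
    have hz : MuHier.Pt.z ∈ (⋂ γ ∈ Set.Iic κ, X γ) ∩ MuHier.mu bot top MuHier.Us := by
      constructor
      · exact Set.mem_iInter₂.mpr fun γ _ => MuHier.z_mem_Xs
      · rw [MuHier.mu_small hbot htop hbt (Or.inr (Or.inl rfl))]
        simp [MuHier.Us]
    have hfin := H MuHier.Us MuHier.Us_mem_Ys X hmem hyp hz
    rw [hXdef] at hfin
    simp only at hfin
    rw [MuHier.mu_Xs hbot htop hbt] at hfin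
    exact (MuHier.z_mem_muXs.mp hfin) rfl
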